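/- For every integer n ≥ 3, the polynomial ζ(λ) := λⁿ - (n/(n-2)) λ^{n-1} - (n/(n-2)) λ + 1 has exactly one root in the open interval (0,1). In particular, ζ(0) = 1 > 0 and ζ(1) = -4/(n-2) < 0. -/

import Mathlib

/-- For every integer `n ≥ 3`, the polynomial
`ζ(λ) = λⁿ - (n/(n-2)) λ^{n-1} - (n/(n-2)) λ + 1` has exactly one root in `(0,1)`.
In particular `ζ(0) = 1 > 0` and `ζ(1) = -4/(n-2) < 0`. -/
theorem unique_root_zeta (n : ℕ) (hn : 3 ≤ n) (ζ : ℝ → ℝ)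
    (hζ : ∀ l : ℝ, ζ l = l ^ n - ((n : ℝ) / (n - 2)) * l ^ (n - 1) - ((n : ℝ) / (n - 2)) * l + 1) :
    (∃! l : ℝ, l ∈ Set.Ioo (0:ℝ) 1 ∧ ζ l = 0) ∧
    ζ 0 = 1 ∧ ζ 1 = -4 / ((n : ℝ) - 2) ∧ -4 / ((n : ℝ) - 2) < 0 := by
  have hn2 : (3:ℝ) ≤ (n:ℝ) := by exact_mod_cast hn
  have hd : (0:ℝ) < (n:ℝ) - 2 := by linarith
  set c : ℝ := (n:ℝ) / ((n:ℝ) - 2) with hc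
  have hcn : c * ((n:ℝ) - 2) = n := by rw [hc]; field_simp [hd.ne']
  have hc1 : 1 < c := by rw [hc, lt_div_iff₀ hd]; linarith
  have hζ0 : ζ 0 = 1 := by
    have h1 : n ≠ 0 := by omega
    have h2 : n - 1 ≠ 0 := by omega
    rw [hζ 0]; simp [zero_pow, h1, h2]
  have hζ1 : ζ 1 = -4 / ((n:ℝ) - 2) := by
    rw [hζ 1, hc]
    simp only [one_pow, mul_one]
    field_simp
    ring
  have hζ1neg : -4 / ((n:ℝ) - 2) < 0 := by
    apply div_neg_of_neg_of_pos <;> linarith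
  -- derivative
  have key : ∀ l : ℝ, HasDerivAt ζ
      ((n:ℝ) * l ^ (n-1) - c * (((n-1:ℕ):ℝ) * l ^ (n-2)) - c) l := by
    intro l
    have h1 : HasDerivAt (fun x : ℝ => x ^ n) ((n:ℝ) * l ^ (n-1)) l := hasDerivAt_pow n l
    have h2 : HasDerivAt (fun x : ℝ => c * x ^ (n-1))
        (c * (((n-1:ℕ):ℝ) * l ^ (n-2))) l := by
      have := (hasDerivAt_pow (n-1) l).const_mul c
      have e : n - 1 - 1 = n - 2 := by omega
      rwa [e] at this
    have h3 : HasDerivAt (fun x : ℝ => c * x) c l := by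
      simpa using (hasDerivAt_id l).const_mul c
    have h := ((h1.sub h2).sub h3).add_const 1
    have : ζ = fun x : ℝ => x ^ n - c * x ^ (n-1) - c * x + 1 := funext hζ
    rw [this]
    exact h
  have hcont : ContinuousOn ζ (Set.Icc (0:ℝ) 1) :=
    fun x _ => (key x).continuousAt.continuousWithinAt
  have hanti : StrictAntiOn ζ (Set.Icc (0:ℝ) 1) := by
    apply strictAntiOn_of_deriv_neg (convex_Icc 0 1) hcont
    intro x hx
    rw [interior_Icc] at hx
    rw [(key x).deriv]
    have hx0 : 0 < x := hx.1
    have hx1 : x < 1 := hx.2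
    have hxp : (0:ℝ) ≤ x ^ (n-2) := pow_nonneg hx0.le _
    have he : x ^ (n-1) = x ^ (n-2) * x := by
      rw [← pow_succ]; congr 1; omega
    have hn1 : ((n-1:ℕ):ℝ) = (n:ℝ) - 1 := by
      have : ((n:ℕ):ℝ) - 1 = ((n-1:ℕ):ℝ) := by
        push_cast [Nat.cast_sub (by omega : 1 ≤ n)]; ring
      linarith [this]
    rw [he, hn1]
    -- need n * (x^(n-2) * x) - c * ((n-1) * x^(n-2)) - c < 0
    have hcn1 : (n:ℝ) ≤ c * ((n:ℝ) - 1) := by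
      rw [hc, div_mul_eq_mul_div, le_div_iff₀ hd]
      nlinarith
    nlinarith [mul_le_mul_of_nonneg_left hx1.le (mul_nonneg (by positivity : (0:ℝ) ≤ (n:ℝ)) hxp)]
  -- existence via IVT
  have hmem : (0:ℝ) ∈ Set.Ioo (ζ 1) (ζ 0) := by
    constructor
    · rw [hζ1]; exact hζ1neg
    · rw [hζ0]; norm_num
  obtain ⟨x, hxIoo, hx0⟩ := intermediate_value_Ioo' (by norm_num : (0:ℝ) ≤ 1) hcont hmem
  refine ⟨⟨x, ⟨hxIoo, hx0⟩, ?_⟩, hζ0, hζ1, hζ1neg⟩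
  rintro y ⟨hyIoo, hy0⟩
  exact hanti.injOn (Set.mem_Icc_of_Ioo hyIoo) (Set.mem_Icc_of_Ioo hxIoo) (by rw [hy0, hx0])
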